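/- The only integers c ≥ 3 with c ≠ 6 such that the triples (2, 6, c), (3, 7, c+1) and (4, 8, c+2) are each multiplicatively dependent are c = 8 and c = 48. -/

import Mathlib

/-- A triple of positive integers is multiplicatively dependent if some
nontrivial integer power product of its entries equals 1. -/
def MulDepTriple (a b c : ℕ) : Prop :=
  ∃ k₁ k₂ k₃ : ℤ, ¬(k₁ = 0 ∧ k₂ = 0 ∧ k₃ = 0) ∧
    (a : ℝ) ^ k₁ * (b : ℝ) ^ k₂ * (c : ℝ) ^ k₃ = 1

protected lemma padicValRat.zpow' {p : ℕ} [Fact p.Prime] {q : ℚ} (hq : q ≠ 0) (k : ℤ) :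
    padicValRat p (q ^ k) = k * padicValRat p q := by
  cases k with
  | ofNat n =>
      rw [Int.ofNat_eq_coe, zpow_natCast, padicValRat.pow q]
  | negSucc n =>
      rw [zpow_negSucc, padicValRat.inv, padicValRat.pow q, Int.negSucc_eq]
      push_cast; try ring

lemma val_eq (p : ℕ) [Fact p.Prime] {a b d : ℕ} (ha : a ≠ 0) (hb : b ≠ 0) (hd : d ≠ 0)
    {k1 k2 k3 : ℤ} (h : (a:ℚ)^k1*(b:ℚ)^k2*(d:ℚ)^k3 = 1) :
    k1 * padicValNat p a + k2 * padicValNat p b + k3 * padicValNat p d = 0 := by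
  have ha' : (a:ℚ) ≠ 0 := Nat.cast_ne_zero.2 ha
  have hb' : (b:ℚ) ≠ 0 := Nat.cast_ne_zero.2 hb
  have hd' : (d:ℚ) ≠ 0 := Nat.cast_ne_zero.2 hd
  have := congrArg (padicValRat p) h
  rw [padicValRat.one, padicValRat.mul (mul_ne_zero (zpow_ne_zero _ ha') (zpow_ne_zero _ hb'))
    (zpow_ne_zero _ hd'), padicValRat.mul (zpow_ne_zero _ ha') (zpow_ne_zero _ hb'),
    padicValRat.zpow' ha', padicValRat.zpow' hb', padicValRat.zpow' hd',
    padicValRat.of_nat, padicValRat.of_nat, padicValRat.of_nat] at this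
  linarith [this]

lemma real_to_rat {a b d : ℕ} {k1 k2 k3 : ℤ}
    (h : (a:ℝ)^k1*(b:ℝ)^k2*(d:ℝ)^k3 = 1) :
    (a:ℚ)^k1*(b:ℚ)^k2*(d:ℚ)^k3 = 1 := by
  have : (((a:ℚ)^k1*(b:ℚ)^k2*(d:ℚ)^k3 : ℚ) : ℝ) = ((1:ℚ):ℝ) := by
    push_cast
    exact h
  exact_mod_cast this

lemma factor_23 {a b n : ℕ} (ha : a.Prime) (hb : b.Prime) (hn : n ≠ 0)
    (h : ∀ q : ℕ, q.Prime → q ∣ n → q = a ∨ q = b) (hab : a ≠ b) :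
    n = a ^ (n.factorization a) * b ^ (n.factorization b) := by
  have hsub : n.factorization.support ⊆ {a, b} := by
    intro q hq
    have hq' := Nat.prime_of_mem_primeFactors (by simpa [Nat.support_factorization] using hq)
    have hd : q ∣ n := Nat.dvd_of_mem_primeFactors (by simpa [Nat.support_factorization] using hq)
    rcases h q hq' hd with rfl | rfl <;> simp
  have := Nat.factorization_prod_pow_eq_self hn
  rw [Finsupp.prod_of_support_subset _ hsub _ (by intros; simp)] at this
  rw [Finset.prod_pair hab] at this
  exact this.symm

lemma form_gen {a b n : ℕ} (ha : a.Prime) (hb : b.Prime) (hab : a ≠ b) (hn : n ≠ 0)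
    (h : MulDepTriple a (a*b) n) : n = a ^ (n.factorization a) * b ^ (n.factorization b) := by
  obtain ⟨k1, k2, k3, hk, heq⟩ := h
  have hq := real_to_rat heq
  haveI : Fact a.Prime := ⟨ha⟩
  haveI : Fact b.Prime := ⟨hb⟩
  have ea := val_eq a ha.ne_zero (Nat.mul_ne_zero ha.ne_zero hb.ne_zero) hn hq
  have eb := val_eq b ha.ne_zero (Nat.mul_ne_zero ha.ne_zero hb.ne_zero) hn hq
  have vaa : padicValNat a a = 1 := padicValNat_self
  have vbb : padicValNat b b = 1 := padicValNat_self
  have vab : padicValNat a b = 0 :=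
    padicValNat.eq_zero_of_not_dvd (fun hd => hab ((Nat.prime_dvd_prime_iff_eq ha hb).1 hd))
  have vba : padicValNat b a = 0 :=
    padicValNat.eq_zero_of_not_dvd (fun hd => hab ((Nat.prime_dvd_prime_iff_eq hb ha).1 hd).symm)
  have vamul : padicValNat a (a*b) = 1 := by
    rw [padicValNat.mul ha.ne_zero hb.ne_zero, vaa, vab]
  have vbmul : padicValNat b (a*b) = 1 := by
    rw [padicValNat.mul ha.ne_zero hb.ne_zero, vbb, vba]
  rw [vaa, vamul] at ea
  rw [vba, vbmul] at eb
  have hk3 : k3 ≠ 0 := by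
    rintro rfl
    simp only [zero_mul, add_zero, Nat.cast_one, mul_one] at ea eb
    push_cast at ea eb
    exact hk ⟨by omega, by omega, rfl⟩
  apply factor_23 ha hb hn _ hab
  intro q hq' hqd
  by_contra hcon
  push_neg at hcon
  obtain ⟨hqa, hqb⟩ := hcon
  haveI : Fact q.Prime := ⟨hq'⟩
  have eq' := val_eq q ha.ne_zero (Nat.mul_ne_zero ha.ne_zero hb.ne_zero) hn hq
  have v1 : padicValNat q a = 0 :=
    padicValNat.eq_zero_of_not_dvd (fun hd => hqa ((Nat.prime_dvd_prime_iff_eq hq' ha).1 hd))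
  have v2 : padicValNat q b = 0 :=
    padicValNat.eq_zero_of_not_dvd (fun hd => hqb ((Nat.prime_dvd_prime_iff_eq hq' hb).1 hd))
  have v3 : padicValNat q (a*b) = 0 := by
    rw [padicValNat.mul ha.ne_zero hb.ne_zero, v1, v2]
  rw [v1, v3] at eq'
  have vpos : 1 ≤ padicValNat q n := one_le_padicValNat_of_dvd hn hqd
  simp only [Nat.cast_zero, mul_zero, zero_add] at eq'
  have : (padicValNat q n : ℤ) = 0 := by
    rcases mul_eq_zero.1 eq' with h | h
    · exact absurd h hk3
    · exact h
  omega

lemma form_gen2 {a b n : ℕ} (ha : a.Prime) (hb : b.Prime) (hab : a ≠ b) (hn : n ≠ 0)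
    (h : MulDepTriple a b n) : n = a ^ (n.factorization a) * b ^ (n.factorization b) := by
  obtain ⟨k1, k2, k3, hk, heq⟩ := h
  have hq := real_to_rat heq
  haveI : Fact a.Prime := ⟨ha⟩
  haveI : Fact b.Prime := ⟨hb⟩
  have ea := val_eq a ha.ne_zero hb.ne_zero hn hq
  have eb := val_eq b ha.ne_zero hb.ne_zero hn hq
  have vaa : padicValNat a a = 1 := padicValNat_self
  have vbb : padicValNat b b = 1 := padicValNat_self
  have vab : padicValNat a b = 0 :=
    padicValNat.eq_zero_of_not_dvd (fun hd => hab ((Nat.prime_dvd_prime_iff_eq ha hb).1 hd))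
  have vba : padicValNat b a = 0 :=
    padicValNat.eq_zero_of_not_dvd (fun hd => hab ((Nat.prime_dvd_prime_iff_eq hb ha).1 hd).symm)
  rw [vaa, vab] at ea
  rw [vba, vbb] at eb
  have hk3 : k3 ≠ 0 := by
    rintro rfl
    simp only [zero_mul, add_zero, Nat.cast_one, mul_one, Nat.cast_zero, mul_zero,
      zero_add] at ea eb
    exact hk ⟨by omega, by omega, rfl⟩
  apply factor_23 ha hb hn _ hab
  intro q hq' hqd
  by_contra hcon
  push_neg at hcon
  obtain ⟨hqa, hqb⟩ := hcon
  haveI : Fact q.Prime := ⟨hq'⟩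
  have eq' := val_eq q ha.ne_zero hb.ne_zero hn hq
  have v1 : padicValNat q a = 0 :=
    padicValNat.eq_zero_of_not_dvd (fun hd => hqa ((Nat.prime_dvd_prime_iff_eq hq' ha).1 hd))
  have v2 : padicValNat q b = 0 :=
    padicValNat.eq_zero_of_not_dvd (fun hd => hqb ((Nat.prime_dvd_prime_iff_eq hq' hb).1 hd))
  rw [v1, v2] at eq'
  have vpos : 1 ≤ padicValNat q n := one_le_padicValNat_of_dvd hn hqd
  simp only [Nat.cast_zero, mul_zero, zero_add, add_zero] at eq'
  have : (padicValNat q n : ℤ) = 0 := by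
    rcases mul_eq_zero.1 eq' with h | h
    · exact absurd h hk3
    · exact h
  omega

lemma pow_mod_period (a d n x : ℕ) (h : a ^ d % n = 1 % n) :
    a ^ x % n = a ^ (x % d) % n := by
  conv_lhs => rw [← Nat.div_add_mod x d]
  rw [pow_add, pow_mul, Nat.mul_mod, Nat.pow_mod, h, ← Nat.pow_mod, one_pow, ← Nat.mul_mod,
    one_mul]

lemma partB {c x y z w : ℕ} (hc : 3 ≤ c) (hc6 : c ≠ 6)
    (hcf : c = 2 ^ x * 3 ^ y) (hcf1 : c + 1 = 3 ^ z * 7 ^ w) :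
    c = 8 ∨ c = 48 := by
  rcases Nat.eq_zero_or_pos y with hy | hy
  · -- c = 2^x
    subst hy
    rw [pow_zero, mul_one] at hcf
    -- w = 0
    have hw : w = 0 := by
      by_contra hw
      have h7 : 7 ∣ c + 1 := by
        rw [hcf1]
        exact Dvd.dvd.mul_left (dvd_pow_self 7 hw) _
      have hmod : 2 ^ x % 7 = 2 ^ (x % 3) % 7 := pow_mod_period 2 3 7 x (by norm_num)
      have hx3 : x % 3 = 0 ∨ x % 3 = 1 ∨ x % 3 = 2 := by omega
      rcases hx3 with h | h | h <;> rw [h] at hmod <;> norm_num at hmod <;> omega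
    subst hw
    rw [pow_zero, mul_one] at hcf1
    -- 2^x + 1 = 3^z, x ≥ 2
    have hx2 : 2 ≤ x := by
      by_contra hx
      push_neg at hx
      interval_cases x <;> omega
    rcases eq_or_lt_of_le hx2 with hx2' | hx3
    · -- x = 2 : 5 = 3^z impossible
      exfalso
      rw [← hx2'] at hcf
      norm_num at hcf
      subst hcf
      rcases z with _ | z'
      · simp at hcf1
      · rw [pow_succ] at hcf1
        omega
    · -- x ≥ 3
      have hx3 : 3 ≤ x := hx3
      have h8 : 2 ^ x % 8 = 0 := by
        have : 2 ^ x = 8 * 2 ^ (x - 3) := by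
          rw [show (8:ℕ) = 2 ^ 3 by norm_num, ← pow_add]
          congr 1
          omega
        omega
      have h3z : 3 ^ z % 8 = 1 := by omega
      have hper : 3 ^ z % 8 = 3 ^ (z % 2) % 8 := pow_mod_period 3 2 8 z (by norm_num)
      have hz2 : z % 2 = 0 := by
        have : z % 2 < 2 := Nat.mod_lt _ (by norm_num)
        interval_cases h : z % 2 <;> simp_all
      -- z = 2t
      obtain ⟨t, rfl⟩ : ∃ t, z = 2 * t := ⟨z / 2, by omega⟩
      have hsq : 2 ^ x + 1 = (3 ^ t) ^ 2 := by
        rw [← pow_mul, mul_comm]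
        omega
      have ht1 : 1 ≤ 3 ^ t := Nat.one_le_pow _ _ (by norm_num)
      obtain ⟨k, hk⟩ : ∃ k, 3 ^ t = k + 1 := ⟨3 ^ t - 1, by omega⟩
      have hexp : (k + 1) ^ 2 = k * (k + 2) + 1 := by ring
      have hprod : 2 ^ x = k * (k + 2) := by
        rw [hk, hexp] at hsq
        omega
      have hk2 : 2 ≤ k := by
        rcases Nat.eq_zero_or_pos t with rfl | ht
        · simp at hk
          omega
        · have : 3 ≤ 3 ^ t := by
            calc 3 = 3 ^ 1 := by norm_num
            _ ≤ 3 ^ t := Nat.pow_le_pow_right (by norm_num) ht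
          omega
      obtain ⟨i, hi, hik⟩ := (Nat.dvd_prime_pow Nat.prime_two).1 ⟨k + 2, hprod⟩
      obtain ⟨j, hj, hjk⟩ := (Nat.dvd_prime_pow Nat.prime_two).1
        (⟨k, by rw [hprod]; ring⟩ : k + 2 ∣ 2 ^ x)
      have hi1 : 1 ≤ i := by
        by_contra hi0
        push_neg at hi0
        interval_cases i <;> omega
      have hi_eq : i = 1 := by
        by_contra hi1'
        have hi2 : 2 ≤ i := by omega
        have hj2 : 2 ≤ j := by
          by_contra hj2'
          push_neg at hj2'
          interval_cases j <;> omega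
        have m4i : 2 ^ i % 4 = 0 := by
          have : 2 ^ i = 4 * 2 ^ (i - 2) := by
            rw [show (4:ℕ) = 2 ^ 2 by norm_num, ← pow_add]
            congr 1
            omega
          omega
        have m4j : 2 ^ j % 4 = 0 := by
          have : 2 ^ j = 4 * 2 ^ (j - 2) := by
            rw [show (4:ℕ) = 2 ^ 2 by norm_num, ← pow_add]
            congr 1
            omega
          omega
        omega
      -- i = 1 → k = 2, 3^t = 3, t = 1, 2^x = 8, c = 8
      rw [hi_eq, pow_one] at hik
      subst hik
      left
      omega
  · -- y ≥ 1
    have h3c : 3 ∣ c := by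
      rw [hcf]
      exact Dvd.dvd.mul_left (dvd_pow_self 3 (by omega)) _
    have hz0 : z = 0 := by
      by_contra hz
      have h3c1 : 3 ∣ c + 1 := by
        rw [hcf1]
        exact Dvd.dvd.mul_right (dvd_pow_self 3 hz) _
      omega
    subst hz0
    rw [pow_zero, one_mul] at hcf1
    have hw1 : 1 ≤ w := by
      by_contra hw
      push_neg at hw
      interval_cases w <;> omega
    -- 3 ∤ w
    have h3w : ¬ (3 ∣ w) := by
      rintro ⟨m, rfl⟩
      have hdvd : 7 ^ 3 - 1 ∣ (7 ^ 3) ^ m - 1 ^ m := Nat.sub_dvd_pow_sub_pow (7 ^ 3) 1 m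
      rw [← pow_mul, one_pow] at hdvd
      have h342 : (342 : ℕ) ∣ c := by
        have : 7 ^ (3 * m) - 1 = c := by omega
        rw [← this]
        simpa using hdvd
      have h19 : (19 : ℕ) ∣ c := dvd_trans (by norm_num) h342
      rw [hcf] at h19
      rcases (Nat.Prime.dvd_mul (by norm_num)).1 h19 with h | h
      · have := Nat.Prime.dvd_of_dvd_pow (p := 19) (by norm_num) h
        omega
      · have := Nat.Prime.dvd_of_dvd_pow (p := 19) (by norm_num) h
        omega
    -- y = 1
    have hmod9 : 7 ^ w % 9 = 7 ^ (w % 3) % 9 := pow_mod_period 7 3 9 w (by norm_num)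
    have hw3 : w % 3 = 1 ∨ w % 3 = 2 := by omega
    have hc9 : ¬ (9 ∣ c) := by
      intro h9
      have : 7 ^ w % 9 = 1 := by omega
      rcases hw3 with h | h <;> rw [h] at hmod9 <;> norm_num at hmod9 <;> omega
    have hy1 : y = 1 := by
      by_contra hy1
      have hy2 : 2 ≤ y := by omega
      apply hc9
      rw [hcf]
      have : (9:ℕ) = 3 ^ 2 := by norm_num
      rw [this]
      exact Dvd.dvd.mul_left (pow_dvd_pow 3 hy2) _
    subst hy1
    rw [pow_one] at hcf
    -- 7^w = 3*2^x + 1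
    rcases Nat.lt_or_ge x 2 with hx | hx2
    · interval_cases x
      · -- c = 3, 7^w = 4
        exfalso
        norm_num at hcf
        rcases w with _ | w'
        · norm_num at hcf1
          omega
        · rw [pow_succ] at hcf1
          omega
      · -- c = 6
        exfalso
        norm_num at hcf
        exact hc6 hcf
    · -- x ≥ 2 : w even
      have h4 : 2 ^ x % 4 = 0 := by
        have : 2 ^ x = 4 * 2 ^ (x - 2) := by
          rw [show (4:ℕ) = 2 ^ 2 by norm_num, ← pow_add]
          congr 1
          omega
        omega
      have hmod4 : 7 ^ w % 4 = 7 ^ (w % 2) % 4 := pow_mod_period 7 2 4 w (by norm_num)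
      have hweven : w % 2 = 0 := by
        have hwlt : w % 2 < 2 := Nat.mod_lt _ (by norm_num)
        by_contra hw2
        have : w % 2 = 1 := by omega
        rw [this] at hmod4
        norm_num at hmod4
        omega
      obtain ⟨u, rfl⟩ : ∃ u, w = 2 * u := ⟨w / 2, by omega⟩
      have hu1 : 1 ≤ u := by omega
      have hm7 : 7 ≤ 7 ^ u := by
        calc (7:ℕ) = 7 ^ 1 := by norm_num
        _ ≤ 7 ^ u := Nat.pow_le_pow_right (by norm_num) hu1
      obtain ⟨k, hk⟩ : ∃ k, 7 ^ u = k + 1 := ⟨7 ^ u - 1, by omega⟩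
      have hsq : c + 1 = (7 ^ u) ^ 2 := by
        rw [← pow_mul, mul_comm]
        exact hcf1
      have hexp : (k + 1) ^ 2 = k * (k + 2) + 1 := by ring
      have hprod : 2 ^ x * 3 = k * (k + 2) := by
        rw [hk, hexp] at hsq
        omega
      -- 3 ∤ k + 2
      have hm3 : 7 ^ u % 3 = 1 := by
        have := pow_mod_period 7 1 3 u (by norm_num)
        rw [Nat.mod_one] at this
        simpa using this
      have h3k2 : ¬ (3 ∣ k + 2) := by
        intro h
        omega
      have hdvd2 : k + 2 ∣ 2 ^ x * 3 := ⟨k, by rw [hprod]; ring⟩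
      have hcop : Nat.Coprime (k + 2) 3 :=
        Nat.coprime_comm.mp ((Nat.Prime.coprime_iff_not_dvd (by norm_num)).2 h3k2)
      have hdvd2' : k + 2 ∣ 2 ^ x := hcop.dvd_of_dvd_mul_right hdvd2
      obtain ⟨s, hs, hsk⟩ := (Nat.dvd_prime_pow Nat.prime_two).1 hdvd2'
      -- 7^u % 16 ∈ {1,7} so s ≤ 3
      have hmod16 : 7 ^ u % 16 = 7 ^ (u % 2) % 16 := pow_mod_period 7 2 16 u (by norm_num)
      have hu2 : u % 2 = 0 ∨ u % 2 = 1 := by omega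
      have hm16 : 7 ^ u % 16 = 1 ∨ 7 ^ u % 16 = 7 := by
        rcases hu2 with h | h <;> rw [h] at hmod16 <;> norm_num at hmod16 <;> omega
      have hs3 : s ≤ 3 := by
        by_contra hs4
        push_neg at hs4
        have : 2 ^ s % 16 = 0 := by
          have : 2 ^ s = 16 * 2 ^ (s - 4) := by
            rw [show (16:ℕ) = 2 ^ 4 by norm_num, ← pow_add]
            congr 1
            omega
          omega
        omega
      have hks : 2 ^ s ≤ 8 := by
        calc 2 ^ s ≤ 2 ^ 3 := Nat.pow_le_pow_right (by norm_num) hs3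
        _ = 8 := by norm_num
      -- k + 2 ≤ 8, 7^u = k+1 ≥ 7 → k+1 = 7, c = 48
      have hk6 : k = 6 := by omega
      subst hk6
      right
      omega

theorem stmt9 (c : ℕ) (hc : 3 ≤ c) (hc6 : c ≠ 6)
    (h1 : MulDepTriple 2 6 c) (h2 : MulDepTriple 3 7 (c + 1))
    (h3 : MulDepTriple 4 8 (c + 2)) : c = 8 ∨ c = 48 := by
  have hc0 : c ≠ 0 := by omega
  have hc10 : c + 1 ≠ 0 := by omega
  have h1' : MulDepTriple 2 (2 * 3) c := by norm_num; exact h1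
  have hf1 := form_gen Nat.prime_two Nat.prime_three (by norm_num) hc0 h1'
  have hf2 := form_gen2 Nat.prime_three (by norm_num) (by norm_num) hc10 h2
  exact partB hc hc6 hf1 hf2
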